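/- Let W^E_1, ..., W^E_L with W^E_l ∈ ℝ^{d_l × d_{l-1}} be the encoder weight matrices of an autoencoder whose encoder is z(x) = Φ_L(W^E_L Φ_{L-1}( ··· Φ_1(W^E_1 x + b^E_1) ··· ) + b^E_L) with d_L = d_z and d_0 = d_x, and let W^D_1, ..., W^D_L with W^D_l ∈ ℝ^{d'_l × d'_{l-1}}, d'_0 = d_z, d'_L = d_x, be the decoder weight matrices of the decoder x̂(z) defined analogously, all activations Φ being differentiable functions ℝ → ℝ applied coordinatewise. Define the symmetric path lasso matrix W_PL := sqrt( ( (W^E_L)² ··· (W^E_1)² ) + ( (W^D_L)² ··· (W^D_1)² )ᵀ ), with squares and square root element-wise. If (W_PL)_{ji} = 0 for some j ∈ {1,...,d_z} and i ∈ {1,...,d_x}, then ∂z_j/∂x_i = 0 for every x ∈ ℝ^{d_x} and ∂x̂_i/∂z_j = 0 for every z ∈ ℝ^{d_z}. -/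

import Mathlib

open Matrix

/-- The ordinary matrix product `M_L * M_{L-1} * ⋯ * M_1` of a chain of matrices
`M_l ∈ ℝ^{d_l × d_{l-1}}` (the empty product being the identity). -/
noncomputable def chainProd (d : ℕ → ℕ)
    (M : ∀ l : ℕ, Matrix (Fin (d (l + 1))) (Fin (d l)) ℝ) :
    (L : ℕ) → Matrix (Fin (d L)) (Fin (d 0)) ℝ
  | 0 => 1
  | L + 1 => M L * chainProd d M L

/-- The feedforward network
`y(x) = Φ_L(W_L Φ_{L-1}(W_{L-1} ⋯ Φ_1(W_1 x + b_1) ⋯) + b_L)`,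
with element-wise activation functions `Φ_l : ℝ → ℝ` applied coordinatewise. -/
noncomputable def netOut (d : ℕ → ℕ)
    (W : ∀ l : ℕ, Matrix (Fin (d (l + 1))) (Fin (d l)) ℝ)
    (b : ∀ l : ℕ, Fin (d (l + 1)) → ℝ) (Φ : ℕ → ℝ → ℝ) :
    (L : ℕ) → (Fin (d 0) → ℝ) → Fin (d L) → ℝ
  | 0, x => x
  | L + 1, x => fun i => Φ L ((W L).mulVec (netOut d W b Φ L x) i + b L i)

lemma chainProd_nonneg (d : ℕ → ℕ)
    (M : ∀ l : ℕ, Matrix (Fin (d (l + 1))) (Fin (d l)) ℝ)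
    (hM : ∀ l p q, 0 ≤ M l p q) :
    ∀ L (p : Fin (d L)) (q : Fin (d 0)), 0 ≤ chainProd d M L p q := by
  intro L
  induction L with
  | zero =>
    intro p q
    simp only [chainProd, Matrix.one_apply]
    split <;> norm_num
  | succ L ih =>
    intro p q
    simp only [chainProd, Matrix.mul_apply]
    exact Finset.sum_nonneg fun k _ => mul_nonneg (hM L p k) (ih k q)

lemma netOut_differentiable (d : ℕ → ℕ)
    (W : ∀ l : ℕ, Matrix (Fin (d (l + 1))) (Fin (d l)) ℝ)
    (b : ∀ l : ℕ, Fin (d (l + 1)) → ℝ) (Φ : ℕ → ℝ → ℝ)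
    (hΦ : ∀ l, Differentiable ℝ (Φ l)) :
    ∀ L (k : Fin (d L)), Differentiable ℝ (fun x => netOut d W b Φ L x k) := by
  intro L
  induction L with
  | zero => intro k; exact differentiable_pi.mp differentiable_id k
  | succ L ih =>
    intro k
    have h : Differentiable ℝ (fun x => (W L).mulVec (netOut d W b Φ L x) k + b L k) := by
      apply Differentiable.add _ (differentiable_const _)
      simp only [Matrix.mulVec, dotProduct]
      exact Differentiable.fun_sum fun m _ => (differentiable_const _).mul (ih m)
    exact (hΦ L).comp h

lemma key (d : ℕ → ℕ)
    (W : ∀ l : ℕ, Matrix (Fin (d (l + 1))) (Fin (d l)) ℝ)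
    (b : ∀ l : ℕ, Fin (d (l + 1)) → ℝ) (Φ : ℕ → ℝ → ℝ)
    (hΦ : ∀ l, Differentiable ℝ (Φ l)) :
    ∀ L (j : Fin (d L)) (i : Fin (d 0)),
      chainProd d (fun l => (W l).map (fun a => a ^ 2)) L j i = 0 →
      ∀ x, fderiv ℝ (fun x => netOut d W b Φ L x j) x (Pi.single i 1) = 0 := by
  intro L
  induction L with
  | zero =>
    intro j i hz x
    have hji : j ≠ i := by
      intro h
      rw [show chainProd d _ 0 = 1 from rfl, Matrix.one_apply, if_pos h] at hz
      norm_num at hz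
    have : fderiv ℝ (fun x : Fin (d 0) → ℝ => x j) x =
        ContinuousLinearMap.proj j :=
      (ContinuousLinearMap.proj j : (Fin (d 0) → ℝ) →L[ℝ] ℝ).hasFDerivAt.fderiv
    show fderiv ℝ (fun x : Fin (d 0) → ℝ => x j) x (Pi.single i 1) = 0
    rw [this]
    simp [Pi.single_eq_of_ne hji]
  | succ L ih =>
    intro j i hz x
    set C := chainProd d (fun l => (W l).map (fun a => a ^ 2)) L with hCdef
    have hsum : ∑ k, (W L j k) ^ 2 * C k i = 0 := by
      simpa [chainProd, Matrix.mul_apply, Matrix.map_apply] using hz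
    have hterm : ∀ k ∈ Finset.univ, (W L j k) ^ 2 * C k i = 0 := by
      rw [← Finset.sum_eq_zero_iff_of_nonneg]
      · exact hsum
      · intro k _
        exact mul_nonneg (sq_nonneg _)
          (chainProd_nonneg d _ (fun l p q => sq_nonneg _) L k i)
    set g : Fin (d L) → (Fin (d 0) → ℝ) → ℝ := fun k x => netOut d W b Φ L x k
    set D : Fin (d L) → ((Fin (d 0) → ℝ) →L[ℝ] ℝ) := fun k => fderiv ℝ (g k) x
    have hg : ∀ k, HasFDerivAt (g k) (D k) x := fun k =>
      ((netOut_differentiable d W b Φ hΦ L k) x).hasFDerivAt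
    have hin : HasFDerivAt (fun x => (W L).mulVec (netOut d W b Φ L x) j + b L j)
        (∑ k, W L j k • D k) x := by
      have h1 : HasFDerivAt (fun x => ∑ k, W L j k * g k x)
          (∑ k, W L j k • D k) x :=
        HasFDerivAt.fun_sum fun k _ => (hg k).const_mul (W L j k)
      have h2 := h1.add_const (b L j)
      have heq : (fun x => (W L).mulVec (netOut d W b Φ L x) j + b L j)
          = fun x => (∑ k, W L j k * g k x) + b L j := by
        funext y; simp [Matrix.mulVec, dotProduct, g]
      rw [heq]; exact h2
    have hcomp : HasFDerivAt (fun x => netOut d W b Φ (L + 1) x j)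
        ((fderiv ℝ (Φ L) ((W L).mulVec (netOut d W b Φ L x) j + b L j)).comp
          (∑ k, W L j k • D k)) x := by
      have := ((hΦ L ((W L).mulVec (netOut d W b Φ L x) j + b L j)).hasFDerivAt).comp x hin
      exact this
    rw [hcomp.fderiv]
    have hzero : (∑ k, W L j k • D k) (Pi.single i 1) = 0 := by
      rw [ContinuousLinearMap.sum_apply]
      apply Finset.sum_eq_zero
      intro k _
      rcases mul_eq_zero.mp (hterm k (Finset.mem_univ k)) with h | h
      · rw [ContinuousLinearMap.smul_apply, pow_eq_zero_iff (by norm_num) |>.mp h]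
        simp
      · rw [ContinuousLinearMap.smul_apply, ih k i h x]
        simp
    simp [ContinuousLinearMap.comp_apply, hzero]


/-- For an autoencoder with encoder `z(x)` (layer widths `dE`,
`dE 0 = d_x`, `dE L = d_z`) and decoder `x̂(z)` (layer widths `dD`, `dD 0 = d_z`,
`dD L = d_x`), both with differentiable element-wise activations, define the
symmetric path lasso matrix
`W_PL := sqrt(((W^E_L)² ⋯ (W^E_1)²) + ((W^D_L)² ⋯ (W^D_1)²)ᵀ)` (squares and square
root element-wise). If `(W_PL)_{ji} = 0`, then `∂z_j/∂x_i = 0` for every `x` and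
`∂x̂_i/∂z_j = 0` for every `z`. -/
theorem autoencoder_pathLasso_zero_implies_partials_zero (L : ℕ) (dE dD : ℕ → ℕ)
    (hlat : dE L = dD 0) (hamb : dE 0 = dD L)
    (WE : ∀ l : ℕ, Matrix (Fin (dE (l + 1))) (Fin (dE l)) ℝ)
    (bE : ∀ l : ℕ, Fin (dE (l + 1)) → ℝ) (ΦE : ℕ → ℝ → ℝ)
    (WD : ∀ l : ℕ, Matrix (Fin (dD (l + 1))) (Fin (dD l)) ℝ)
    (bD : ∀ l : ℕ, Fin (dD (l + 1)) → ℝ) (ΦD : ℕ → ℝ → ℝ)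
    (hΦE : ∀ l, Differentiable ℝ (ΦE l)) (hΦD : ∀ l, Differentiable ℝ (ΦD l))
    (j : Fin (dE L)) (i : Fin (dE 0))
    (hzero :
      Real.sqrt ((chainProd dE (fun l => (WE l).map (fun a => a ^ 2)) L) j i +
        ((chainProd dD (fun l => (WD l).map (fun a => a ^ 2)) L)ᵀ)
          (Fin.cast hlat j) (Fin.cast hamb i)) = 0) :
    (∀ x : Fin (dE 0) → ℝ,
        fderiv ℝ (fun x => netOut dE WE bE ΦE L x j) x (Pi.single i 1) = 0) ∧
      (∀ z : Fin (dD 0) → ℝ,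
        fderiv ℝ (fun z => netOut dD WD bD ΦD L z (Fin.cast hamb i)) z
          (Pi.single (Fin.cast hlat j) 1) = 0) := by
  set A := chainProd dE (fun l => (WE l).map (fun a => a ^ 2)) L j i with hA
  set B := (chainProd dD (fun l => (WD l).map (fun a => a ^ 2)) L)
      (Fin.cast hamb i) (Fin.cast hlat j) with hB
  have hAnn : 0 ≤ A := chainProd_nonneg dE _ (fun l p q => sq_nonneg _) L j i
  have hBnn : 0 ≤ B := chainProd_nonneg dD _ (fun l p q => sq_nonneg _) L _ _
  have hsum : A + B = 0 := by
    have h := Real.sqrt_eq_zero'.mp hzero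
    have : A + B ≤ 0 := by simpa [Matrix.transpose_apply] using h
    linarith
  have hA0 : A = 0 := by linarith
  have hB0 : B = 0 := by linarith
  exact ⟨key dE WE bE ΦE hΦE L j i hA0,
    key dD WD bD ΦD hΦD L (Fin.cast hamb i) (Fin.cast hlat j) hB0⟩
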